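/- If a tuple of matrices M_1, ..., M_{p+1} in GL(n, ℂ) (n ≥ 2) with product equal to the identity has generic eigenvalues (no non-genericity relation of the form ∏_{j} ∏_{k∈Φ_j} σ_{k,j} = 1 with all |Φ_j| equal to some m < n holds), then the tuple is irreducible. -/

import Mathlib

open Polynomial Matrix

private lemma multiset_exists_preimage {α β : Type*} [DecidableEq α] [DecidableEq β] (f : α → β) :
    ∀ (s : Multiset β) (t : Multiset α), s ≤ t.map f → ∃ u, u ≤ t ∧ u.map f = s := by
  intro s
  induction s using Multiset.induction with
  | empty => exact fun t _ => ⟨0, Multiset.zero_le _, rfl⟩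
  | cons b s ih =>
    intro t h
    have hb : b ∈ t.map f := Multiset.mem_of_le h (Multiset.mem_cons_self b s)
    obtain ⟨a, hat, rfl⟩ := Multiset.mem_map.1 hb
    have hs : s ≤ (t.erase a).map f := by
      rw [Multiset.map_erase_of_mem f t hat]
      have := Multiset.erase_le_erase (f a) h
      rwa [Multiset.erase_cons_head] at this
    obtain ⟨u, hu, rfl⟩ := ih (t.erase a) hs
    exact ⟨a ::ₘ u, (Multiset.cons_le_cons a hu).trans (le_of_eq (Multiset.cons_erase hat)),
      Multiset.map_cons f a u⟩

private lemma charpoly_restrict_dvd {K W : Type*} [Field K] [AddCommGroup W] [Module K W]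
    [FiniteDimensional K W] (f : W →ₗ[K] W) (V : Submodule K W)
    (hf : ∀ v ∈ V, f v ∈ V) :
    (f.restrict hf).charpoly ∣ f.charpoly := by
  obtain ⟨V', hc⟩ := Submodule.exists_isCompl V
  set e := Submodule.prodEquivOfIsCompl V V' hc with he
  let bV := Module.finBasis K V
  let bV' := Module.finBasis K V'
  let b : Module.Basis _ K W := (bV.prod bV').map e
  have hsymm : ∀ j, e.symm (f (bV j)) = (f.restrict hf (bV j), 0) := by
    intro j
    rw [LinearEquiv.symm_apply_eq]
    simp [he, Submodule.coe_prodEquivOfIsCompl']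
  have hbapp : ∀ j, b (Sum.inl j) = (bV j : W) := by
    intro j
    simp only [b, Module.Basis.map_apply]
    have h1 : ((bV.prod bV') (Sum.inl j)) = (bV j, 0) :=
      Prod.ext (Module.Basis.prod_apply_inl_fst bV bV' j) (Module.Basis.prod_apply_inl_snd bV bV' j)
    rw [h1, he, Submodule.coe_prodEquivOfIsCompl']
    simp
  have hrepr : ∀ (x : W) i, b.repr x i = (bV.prod bV').repr (e.symm x) i := by
    intro x i
    simp [b, Module.Basis.map_repr]
  have key : (LinearMap.toMatrix b b f) =
      Matrix.fromBlocks (LinearMap.toMatrix bV bV (f.restrict hf))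
        ((LinearMap.toMatrix b b f).toBlocks₁₂) 0
        ((LinearMap.toMatrix b b f).toBlocks₂₂) := by
    ext i j
    rcases i with i | i <;> rcases j with j | j
    · simp only [Matrix.fromBlocks_apply₁₁, LinearMap.toMatrix_apply, hbapp, hrepr, hsymm,
        Module.Basis.prod_repr_inl]
    · rfl
    · simp only [Matrix.fromBlocks_apply₂₁, LinearMap.toMatrix_apply, hbapp, hrepr, hsymm,
        Module.Basis.prod_repr_inr, Matrix.zero_apply]
      simp
    · rfl
  rw [← LinearMap.charpoly_toMatrix f b, key, Matrix.charpoly_fromBlocks_zero₂₁,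
    LinearMap.charpoly_toMatrix]
  exact Dvd.intro _ rfl

private lemma monic_dvd_prod_X_sub_C {n : ℕ} (a : Fin n → ℂ) (q : ℂ[X]) (hq : q.Monic)
    (hdvd : q ∣ ∏ k, (X - C (a k))) :
    ∃ Φ : Finset (Fin n), Φ.card = q.natDegree ∧ q = ∏ k ∈ Φ, (X - C (a k)) := by
  have hPeq : (∏ k, (X - C (a k))) =
      ((Finset.univ.val.map a).map fun r => X - C r).prod := by
    rw [Multiset.map_map]
    rfl
  have hP : (∏ k, (X - C (a k))) ≠ 0 := by
    refine Monic.ne_zero (monic_prod_of_monic _ _ fun k _ => monic_X_sub_C (a k))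
  have hroots : q.roots ≤ Finset.univ.val.map a := by
    have h := Polynomial.roots.le_of_dvd hP hdvd
    rwa [hPeq, Polynomial.roots_multiset_prod_X_sub_C] at h
  have hsplits : q.Splits := IsAlgClosed.splits q
  have hcard : q.roots.card = q.natDegree :=
    (Polynomial.splits_iff_card_roots.1 hsplits)
  have hqeq : q = (q.roots.map fun r => X - C r).prod := by
    have h := Polynomial.C_leadingCoeff_mul_prod_multiset_X_sub_C hcard
    rw [hq.leadingCoeff] at h
    simpa using h.symm
  obtain ⟨u, hu, hmap⟩ := multiset_exists_preimage a q.roots Finset.univ.val hroots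
  have hnd : u.Nodup := Multiset.nodup_of_le hu Finset.univ.nodup
  refine ⟨⟨u, hnd⟩, ?_, ?_⟩
  · have : u.card = q.roots.card := by rw [← hmap, Multiset.card_map]
    rw [← hcard]
    exact this
  · rw [hqeq, ← hmap, Multiset.map_map]
    rfl

theorem stmt10 (p n : ℕ) (hn : 2 ≤ n) (M : Fin (p + 1) → Matrix (Fin n) (Fin n) ℂ)
    (hinv : ∀ j, IsUnit (M j))
    (hprod : (List.ofFn M).prod = 1)
    (σ : Fin (p + 1) → Fin n → ℂ)
    (hσ : ∀ j, (M j).charpoly = ∏ k, (X - C (σ j k)))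
    (hgen : ¬∃ (m : ℕ) (Φ : Fin (p + 1) → Finset (Fin n)),
      0 < m ∧ m < n ∧ (∀ j, (Φ j).card = m) ∧ ∏ j, ∏ k ∈ Φ j, σ j k = 1) :
    ∀ V : Submodule ℂ (Fin n → ℂ),
      (∀ j, ∀ v ∈ V, Matrix.toLin' (M j) v ∈ V) → V = ⊥ ∨ V = ⊤ := by
  intro V hV
  by_contra hcon
  push_neg at hcon
  obtain ⟨hbot, htop⟩ := hcon
  apply hgen
  set m := Module.finrank ℂ V with hm
  have hm0 : 0 < m := by
    rw [hm, Module.finrank_pos_iff]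
    exact Submodule.nontrivial_iff_ne_bot.2 hbot
  have hmn : m < n := by
    have := Submodule.finrank_lt (K := ℂ) (V := Fin n → ℂ) htop
    rwa [Module.finrank_fin_fun] at this
  -- the restricted endomorphisms
  let f : Fin (p + 1) → Module.End ℂ V := fun j => (Matrix.toLin' (M j)).restrict (hV j)
  -- product of restrictions is the identity
  have hlist : ∀ (l : List (Fin (p + 1))) (v : V),
      (((l.map f).prod : Module.End ℂ V) v : Fin n → ℂ)
        = ((l.map fun j => Matrix.toLin' (M j)).prod) (v : Fin n → ℂ) := by
    intro l
    induction l with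
    | nil => intro v; simp
    | cons j l ih =>
      intro v
      simp only [List.map_cons, List.prod_cons, Module.End.mul_apply]
      rw [LinearMap.restrict_coe_apply, ih]
  have htl : ∀ l : List (Matrix (Fin n) (Fin n) ℂ),
      Matrix.toLin' l.prod = (l.map Matrix.toLin').prod := by
    intro l
    induction l with
    | nil => simp [Matrix.toLin'_one, Module.End.one_eq_id]
    | cons A l ih =>
      simp only [List.prod_cons, List.map_cons, Matrix.toLin'_mul, ih]
      rfl
  have hbig : ((List.ofFn fun j => Matrix.toLin' (M j)).prod :
      (Fin n → ℂ) →ₗ[ℂ] (Fin n → ℂ)) = 1 := by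
    have h1 : (List.ofFn fun j => Matrix.toLin' (M j)) = (List.ofFn M).map Matrix.toLin' := by
      rw [List.map_ofFn]; rfl
    rw [h1, ← htl, hprod, Matrix.toLin'_one]
    rfl
  have hfprod : (List.ofFn f).prod = 1 := by
    refine LinearMap.ext fun v => Subtype.ext ?_
    have h1 := hlist (List.finRange (p + 1)) v
    rw [← List.ofFn_eq_map, ← List.ofFn_eq_map, hbig] at h1
    simpa using h1
  -- determinants of restrictions multiply to 1
  have hdet1 : ∏ j, LinearMap.det (f j) = 1 := by
    have h2 := congrArg LinearMap.det hfprod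
    rw [map_list_prod, _root_.map_one, List.map_ofFn, List.prod_ofFn] at h2
    simpa using h2
  -- eigenvalue subsets
  have hexists : ∀ j, ∃ Φ : Finset (Fin n), Φ.card = m ∧
      (f j).charpoly = ∏ k ∈ Φ, (X - C (σ j k)) := by
    intro j
    have hdvd : (f j).charpoly ∣ ∏ k, (X - C (σ j k)) := by
      have h1 := charpoly_restrict_dvd (Matrix.toLin' (M j)) V (hV j)
      have h2 : (Matrix.toLin' (M j)).charpoly = (M j).charpoly := by
        rw [← LinearMap.charpoly_toMatrix (Matrix.toLin' (M j)) (Pi.basisFun ℂ (Fin n)),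
          LinearMap.toMatrix_eq_toMatrix', LinearMap.toMatrix'_toLin']
      rw [h2, hσ j] at h1
      exact h1
    obtain ⟨Φ, hΦc, hΦ⟩ := monic_dvd_prod_X_sub_C (σ j) _ (LinearMap.charpoly_monic _) hdvd
    refine ⟨Φ, ?_, hΦ⟩
    rw [hΦc, LinearMap.charpoly_natDegree]
  choose Φ hΦcard hΦchar using hexists
  refine ⟨m, Φ, hm0, hmn, hΦcard, ?_⟩
  have hdetj : ∀ j, LinearMap.det (f j) = ∏ k ∈ Φ j, σ j k := by
    intro j
    rw [LinearMap.det_eq_sign_charpoly_coeff, hΦchar j]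
    have hc : (∏ k ∈ Φ j, (X - C (σ j k))).coeff 0 = (-1 : ℂ) ^ m * ∏ k ∈ Φ j, σ j k := by
      rw [coeff_zero_eq_eval_zero, eval_prod]
      have : ∀ k ∈ Φ j, eval 0 (X - C (σ j k)) = (-1) * σ j k := by
        intro k _; simp
      rw [Finset.prod_congr rfl this, Finset.prod_mul_distrib, Finset.prod_const, hΦcard j]
    rw [hc, ← hm, ← mul_assoc, ← mul_pow]
    simp
  rw [← hdet1]
  exact (Finset.prod_congr rfl fun j _ => (hdetj j).symm)
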